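/- Let H ∈ 𝔽₂^{m×n} be a parity-check matrix of a binary linear code C such that every row of H has Hamming weight exactly 2, and let R be the associated equivalence relation on the column index set I. Then the minimum Hamming distance of C equals the minimum cardinality of an equivalence class of R: d(C) = min_{S ∈ 𝒮} |S|, where 𝒮 is the set of equivalence classes of R. -/

import Mathlib

open Matrix BigOperators Finset

section Defs

variable {J I : Type*} [Fintype J] [Fintype I] [DecidableEq I]

/-- The support of row `j` of a binary matrix `H`. -/
def rowSupp (H : Matrix J I (ZMod 2)) (j : J) : Finset I :=
  Finset.univ.filter fun i => H j i = 1

/-- The fundamental cone of a binary matrix `H`. -/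
def fundCone (H : Matrix J I (ZMod 2)) : Set (I → ℝ) :=
  {x | (∀ i, 0 ≤ x i) ∧
    ∀ j : J, ∀ ℓ ∈ rowSupp H j, x ℓ ≤ ∑ i ∈ (rowSupp H j).erase ℓ, x i}

/-- BEC pseudoweight: size of the support. -/
noncomputable def wBEC (x : I → ℝ) : ℝ := ({i | x i ≠ 0}.ncard : ℝ)

/-- AWGNC pseudoweight. -/
noncomputable def wAWGNC (x : I → ℝ) : ℝ := (∑ i, x i) ^ 2 / ∑ i, x i ^ 2

/-- Max-fractional weight. -/
noncomputable def wMaxFrac (x : I → ℝ) : ℝ := (∑ i, x i) / sSup (Set.range x)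

/-- `H` is a parity-check matrix of the code `C`. -/
def IsParityCheck (H : Matrix J I (ZMod 2)) (C : Submodule (ZMod 2) (I → ZMod 2)) : Prop :=
  ∀ c, c ∈ C ↔ H.mulVec c = 0

/-- Minimum Hamming distance of a code. -/
noncomputable def minDist (C : Submodule (ZMod 2) (I → ZMod 2)) : ℕ :=
  sInf {d | ∃ c ∈ C, c ≠ 0 ∧ hammingNorm c = d}

/-- Minimum pseudoweight of `H` w.r.t. pseudoweight function `w`:
the infimum of `w` over all nonzero pseudocodewords (`⊤` if there are none). -/
noncomputable def minPW (w : (I → ℝ) → ℝ) (H : Matrix J I (ZMod 2)) : EReal :=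
  sInf ((fun x => (w x : EReal)) '' (fundCone H \ {0}))

/-- The chain (connectivity) relation associated with a binary matrix whose rows
have weight 2: `i` and `i'` are related iff they are equal or joined by a chain of rows
whose supports are exactly consecutive pairs. -/
def chainRel (H : Matrix J I (ZMod 2)) (i i' : I) : Prop :=
  i = i' ∨ ∃ ℓ : ℕ, 1 ≤ ℓ ∧ ∃ (c : Fin (ℓ + 1) → I) (r : Fin ℓ → J),
    c 0 = i ∧ c (Fin.last ℓ) = i' ∧
    ∀ t : Fin ℓ, rowSupp H (r t) = {c t.castSucc, c t.succ}

/-- The 0-1 real matrix associated with a binary matrix. -/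
def toRealMatrix (H : Matrix J I (ZMod 2)) : Matrix J I ℝ :=
  Matrix.of fun j i => if H j i = 1 then (1 : ℝ) else 0

/-- The Tanner graph of a binary matrix. -/
def tannerGraph (H : Matrix J I (ZMod 2)) : SimpleGraph (J ⊕ I) :=
  SimpleGraph.fromRel fun u v => ∃ j i, u = Sum.inl j ∧ v = Sum.inr i ∧ H j i = 1

end Defs

/-- The multiset of (real) eigenvalues, with multiplicity, of a real square matrix:
the real roots of its characteristic polynomial. -/
noncomputable def eigMult {ι : Type*} [Fintype ι] [DecidableEq ι] (A : Matrix ι ι ℝ) :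
    Multiset ℝ :=
  A.charpoly.roots

section FinDefs

variable {n : ℕ}

/-- The non-increasing rearrangement of a real vector. -/
noncomputable def sortDesc (x : Fin n → ℝ) : Fin n → ℝ :=
  fun i => x (Tuple.sort (fun j => -x j) i)

/-- `Φ(ξ) = ∫₀^ξ φ`, where `φ(ξ) = x'_i` for `i - 1 < ξ ≤ i` and `x'` is the
non-increasing rearrangement of `x`. -/
noncomputable def bigPhi (x : Fin n → ℝ) (ξ : ℝ) : ℝ :=
  ∑ i : Fin n, sortDesc x i * min 1 (max 0 (ξ - (i : ℝ)))

/-- BSC pseudoweight: `2 Φ⁻¹(Φ(n)/2)`. -/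
noncomputable def wBSC (x : Fin n → ℝ) : ℝ :=
  2 * sInf {ξ : ℝ | bigPhi x (n : ℝ) / 2 ≤ bigPhi x ξ}

/-- The pseudocodeword redundancy of a code `C` w.r.t. the pseudoweight function `w`:
the smallest number of rows of a parity-check matrix `H` of `C` whose minimum
pseudoweight equals the minimum distance of `C` (`⊤` if there is no such matrix). -/
noncomputable def pcRedundancy (w : (Fin n → ℝ) → ℝ)
    (C : Submodule (ZMod 2) (Fin n → ZMod 2)) : ℕ∞ :=
  sInf {k : ℕ∞ | ∃ (m : ℕ) (H : Matrix (Fin m) (Fin n) (ZMod 2)),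
    k = (m : ℕ∞) ∧ IsParityCheck H C ∧ minPW w H = ((minDist C : ℝ) : EReal)}

end FinDefs


set_option linter.unusedSectionVars false

section Aux

variable {J I : Type*} [Fintype J] [Fintype I] [DecidableEq I]

/-- One-step relation: `a` and `b` are the support of some row. -/
def Step (H : Matrix J I (ZMod 2)) (a b : I) : Prop :=
  ∃ j, rowSupp H j = ({a, b} : Finset I)

lemma step_symm (H : Matrix J I (ZMod 2)) : Symmetric (Step H) := by
  rintro a b ⟨j, hj⟩
  exact ⟨j, by rw [hj, Finset.pair_comm]⟩

lemma chainRel_iff (H : Matrix J I (ZMod 2)) (i i' : I) :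
    chainRel H i i' ↔ Relation.ReflTransGen (Step H) i i' := by
  constructor
  · rintro (rfl | ⟨ℓ, hℓ, c, r, h0, hlast, hrow⟩)
    · exact Relation.ReflTransGen.refl
    · subst h0; subst hlast
      have key : ∀ t : Fin (ℓ + 1), Relation.ReflTransGen (Step H) (c 0) (c t) := by
        intro t
        induction t using Fin.induction with
        | zero => exact .refl
        | succ s ih => exact ih.tail ⟨r s, hrow s⟩
      exact key (Fin.last ℓ)
  · intro h
    induction h with
    | refl => exact Or.inl rfl
    | @tail b d h1 hs ih =>
      obtain ⟨j, hj⟩ := hs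
      rcases ih with rfl | ⟨ℓ, hℓ, c, r, h0, hlast, hrow⟩
      · refine Or.inr ⟨1, le_refl 1, ![i, d], ![j], rfl, rfl, ?_⟩
        intro t
        fin_cases t
        simpa using hj
      · refine Or.inr ⟨ℓ + 1, by omega, Fin.snoc c d, Fin.snoc r j, ?_, ?_, ?_⟩
        · rw [show (0 : Fin (ℓ + 1 + 1)) = Fin.castSucc 0 from rfl, Fin.snoc_castSucc]
          exact h0
        · simp
        · intro t
          induction t using Fin.lastCases with
          | last =>
            simp only [Fin.snoc_last, Fin.snoc_castSucc, Fin.succ_last]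
            rw [hlast]
            exact hj
          | cast s =>
            simp only [Fin.snoc_castSucc, Fin.succ_castSucc]
            simpa using hrow s

lemma zmod2_cases : ∀ x : ZMod 2, x = 0 ∨ x = 1 := by decide

lemma zmod2_add_eq_zero : ∀ x y : ZMod 2, x + y = 0 → x = y := by decide

lemma mulVec_row (H : Matrix J I (ZMod 2)) (c : I → ZMod 2) (j : J) {a b : I}
    (hab : a ≠ b) (h : rowSupp H j = {a, b}) : H.mulVec c j = c a + c b := by
  have : H.mulVec c j = ∑ i ∈ rowSupp H j, c i := by
    rw [Matrix.mulVec, dotProduct, rowSupp, Finset.sum_filter]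
    refine Finset.sum_congr rfl fun i _ => ?_
    rcases zmod2_cases (H j i) with h' | h' <;> simp [h']
  rw [this, h, Finset.sum_pair hab]

lemma codeword_const (H : Matrix J I (ZMod 2)) (hrows : ∀ j, (rowSupp H j).card = 2)
    (c : I → ZMod 2) (hc : H.mulVec c = 0) {i i' : I} (h : chainRel H i i') :
    c i = c i' := by
  rw [chainRel_iff] at h
  induction h with
  | refl => rfl
  | @tail b d h1 hs ih =>
    obtain ⟨j, hj⟩ := hs
    have hbd : b ≠ d := by
      intro h'
      have := hrows j
      rw [hj, h'] at this
      simp at this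
    have h0 : c b + c d = 0 := by
      have := congrFun hc j
      rwa [mulVec_row H c j hbd hj] at this
    exact ih.trans (zmod2_add_eq_zero _ _ h0)

lemma step_chainRel (H : Matrix J I (ZMod 2)) {i a b : I}
    (h : chainRel H i a) (hs : Step H a b) : chainRel H i b := by
  rw [chainRel_iff] at h ⊢
  exact h.tail hs

lemma chainRel_equiv (H : Matrix J I (ZMod 2)) : Equivalence (chainRel H) := by
  have : ∀ i i', chainRel H i i' ↔ Relation.ReflTransGen (Step H) i i' := chainRel_iff H
  constructor
  · intro i; exact Or.inl rfl
  · intro i i' h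
    rw [this] at h ⊢
    haveI : Std.Symm (Step H) := ⟨fun a b h => step_symm H h⟩; exact Std.Symm.symm _ _ h
  · intro a b c hab hbc
    rw [this] at hab hbc ⊢
    exact hab.trans hbc

open Classical in
lemma indicator_codeword (H : Matrix J I (ZMod 2)) (hrows : ∀ j, (rowSupp H j).card = 2)
    (i : I) : H.mulVec (fun i' => if chainRel H i i' then (1 : ZMod 2) else 0) = 0 := by
  funext j
  obtain ⟨a, b, hab, hsupp⟩ := Finset.card_eq_two.mp (hrows j)
  rw [mulVec_row H _ j hab hsupp]
  have hstep : Step H a b := ⟨j, hsupp⟩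
  have hiff : chainRel H i a ↔ chainRel H i b :=
    ⟨fun h => step_chainRel H h hstep,
     fun h => step_chainRel H h (step_symm H hstep)⟩
  by_cases hA : chainRel H i a
  · rw [if_pos hA, if_pos (hiff.mp hA), Pi.zero_apply]; decide
  · rw [if_neg hA, if_neg (fun h => hA (hiff.mpr h)), Pi.zero_apply]; decide

lemma ncard_setOf {p : I → Prop} [DecidablePred p] :
    {i | p i}.ncard = (Finset.univ.filter p).card := by
  rw [Set.ncard_eq_toFinset_card', Set.toFinset_setOf]

end Aux

/-- If `H` is a parity-check matrix of the binary linear code `C` all of whose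
rows have Hamming weight exactly 2, and `R` is the associated chain equivalence relation on
the column index set, then the minimum Hamming distance of `C` equals the minimum cardinality
of an equivalence class of `R`. -/
theorem statement6 {m n : ℕ} (C : Submodule (ZMod 2) (Fin n → ZMod 2))
    (H : Matrix (Fin m) (Fin n) (ZMod 2)) (hH : IsParityCheck H C)
    (hrows : ∀ j, (rowSupp H j).card = 2) :
    minDist C = sInf {k : ℕ | ∃ i : Fin n, Set.ncard {i' | chainRel H i i'} = k} := by
  classical
  have hind : ∀ i : Fin n, ∃ c ∈ C, c ≠ 0 ∧
      hammingNorm c = Set.ncard {i' | chainRel H i i'} := by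
    intro i
    refine ⟨fun i' => if chainRel H i i' then 1 else 0,
      (hH _).mpr (indicator_codeword H hrows i), ?_, ?_⟩
    · intro h0
      have := congrFun h0 i
      rw [if_pos ((chainRel_equiv H).refl i)] at this
      simp at this
    · rw [hammingNorm, ncard_setOf]
      congr 1
      refine Finset.filter_congr fun i' _ => ?_
      by_cases h : chainRel H i i' <;> simp [h]
  rcases Nat.eq_zero_or_pos n with hn | hn
  · subst hn
    have h1 : {d | ∃ c ∈ C, c ≠ 0 ∧ hammingNorm c = d} = ∅ := by
      ext d
      simp only [Set.mem_setOf_eq, Set.mem_empty_iff_false, iff_false]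
      rintro ⟨c, _, hc0, _⟩
      exact hc0 (funext fun i => i.elim0)
    have h2 : {k : ℕ | ∃ i : Fin 0, Set.ncard {i' | chainRel H i i'} = k} = ∅ := by
      ext k
      simp only [Set.mem_setOf_eq, Set.mem_empty_iff_false, iff_false]
      rintro ⟨i, _⟩
      exact i.elim0
    rw [minDist, h1, h2]
  · have hKne : {k : ℕ | ∃ i : Fin n, Set.ncard {i' | chainRel H i i'} = k}.Nonempty := by
      exact ⟨_, ⟨0, hn⟩, rfl⟩
    obtain ⟨c0, hc0C, hc0ne, hc0norm⟩ := hind ⟨0, hn⟩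
    have hDne : {d | ∃ c ∈ C, c ≠ 0 ∧ hammingNorm c = d}.Nonempty :=
      ⟨_, c0, hc0C, hc0ne, rfl⟩
    rw [minDist]
    apply le_antisymm
    · obtain ⟨i, hi⟩ := Nat.sInf_mem hKne
      obtain ⟨c, hcC, hcne, hcn⟩ := hind i
      exact Nat.sInf_le ⟨c, hcC, hcne, hcn.trans hi⟩
    · obtain ⟨c, hcC, hcne, hcn⟩ := Nat.sInf_mem hDne
      obtain ⟨i, hi⟩ := Function.ne_iff.mp hcne
      have hmv : H.mulVec c = 0 := (hH c).mp hcC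
      have hsub : {i' | chainRel H i i'} ⊆ {i' | c i' ≠ 0} := by
        intro i' hi'
        have := codeword_const H hrows c hmv hi'
        simpa [← this] using hi
      have hle : Set.ncard {i' | chainRel H i i'} ≤ hammingNorm c := by
        calc Set.ncard {i' | chainRel H i i'}
            ≤ Set.ncard {i' | c i' ≠ 0} := Set.ncard_le_ncard hsub (Set.toFinite _)
          _ = hammingNorm c := by rw [hammingNorm]; exact ncard_setOf
      calc sInf {k : ℕ | ∃ i : Fin n, Set.ncard {i' | chainRel H i i'} = k}
          ≤ Set.ncard {i' | chainRel H i i'} := Nat.sInf_le ⟨i, rfl⟩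
        _ ≤ hammingNorm c := hle
        _ = _ := hcn
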